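/- Let G be a group, let Z be a central torsion-free subgroup of G, and let f, g ∈ G with f g f⁻¹ g⁻¹ ∈ Z and f^m = g^m for some m ≥ 1. If additionally G is torsion-free, then f = g. -/
import Mathlib

/-- If `Z` is a central torsion-free subgroup of a torsion-free group `G`,
`f g f⁻¹ g⁻¹ ∈ Z`, and `f^m = g^m` for some `m ≥ 1`, then `f = g`. -/
theorem eq_of_pow_eq_of_commutator_central {G : Type*} [Group G] (Z : Subgroup G)
    (hZcentral : Z ≤ Subgroup.center G)
    (hZtf : ∀ z ∈ Z, ∀ n : ℕ, 1 ≤ n → z ^ n = 1 → z = 1)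
    (hGtf : ∀ x : G, ∀ n : ℕ, 1 ≤ n → x ^ n = 1 → x = 1)
    (f g : G) (hcomm : f * g * f⁻¹ * g⁻¹ ∈ Z)
    (m : ℕ) (hm : 1 ≤ m) (h : f ^ m = g ^ m) : f = g := by
  set u := f * g * f⁻¹ * g⁻¹ with hu
  have hc : ∀ x : G, u * x = x * u := fun x =>
    ((Subgroup.mem_center_iff.mp (hZcentral hcomm)) x).symm
  have hcu : Commute u g := hc g
  have h1 : f * g * f⁻¹ = u * g := by rw [hu]; group
  have h2 : (f * g * f⁻¹) ^ m = f * g ^ m * f⁻¹ := conj_pow ..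
  have h3 : (u * g) ^ m = u ^ m * g ^ m := hcu.mul_pow m
  have h4 : f * g ^ m * f⁻¹ = u ^ m * g ^ m := by rw [← h2, h1, h3]
  have h5 : u ^ m = 1 := by
    have : f * f ^ m * f⁻¹ = u ^ m * f ^ m := by rw [h, h4, ← h]
    have hff : f * f ^ m * f⁻¹ = f ^ m := by group
    rw [hff] at this
    exact mul_right_cancel (a := u ^ m) (by rw [← this, one_mul])
  have hu1 : u = 1 := hZtf u hcomm m hm h5
  have hfg : Commute f g := by
    unfold Commute SemiconjBy
    calc f * g = (f * g * f⁻¹ * g⁻¹) * (g * f) := by group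
    _ = g * f := by rw [← hu, hu1, one_mul]
  have h6 : (f * g⁻¹) ^ m = 1 := by
    rw [(hfg.inv_right).mul_pow, h, inv_pow, mul_inv_cancel]
  have := hGtf (f * g⁻¹) m hm h6
  have : f * g⁻¹ * g = 1 * g := by rw [this]
  simpa using this
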